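/- Separation Lemma: if polyhedral cones σ and σ' in N meet in a common face τ = σ ∩ σ', then there exists m ∈ σ∨ ∩ (−σ')∨ with τ = H_m ∩ σ = H_m ∩ σ'. -/

import Mathlib

namespace SepAux

open scoped Classical RealInnerProductSpace

variable {N : Type*} [AddCommGroup N] [Module ℝ N]

def coneOf (S : Finset N) : Set N :=
  {x | ∃ c : N → ℝ, (∀ v, 0 ≤ c v) ∧ x = ∑ v ∈ S, c v • v}

lemma zero_mem_coneOf (S : Finset N) : (0 : N) ∈ coneOf S :=
  ⟨0, fun _ => le_rfl, by simp⟩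

lemma add_mem_coneOf {S : Finset N} {x y : N} (hx : x ∈ coneOf S) (hy : y ∈ coneOf S) :
    x + y ∈ coneOf S := by
  obtain ⟨c, hc, rfl⟩ := hx
  obtain ⟨d, hd, rfl⟩ := hy
  exact ⟨c + d, fun v => add_nonneg (hc v) (hd v), by
    simp [add_smul, Finset.sum_add_distrib]⟩

lemma smul_mem_coneOf {S : Finset N} {x : N} {r : ℝ} (hr : 0 ≤ r) (hx : x ∈ coneOf S) :
    r • x ∈ coneOf S := by
  obtain ⟨c, hc, rfl⟩ := hx
  exact ⟨r • c, fun v => mul_nonneg hr (hc v), by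
    simp [Finset.smul_sum, smul_smul]⟩

lemma mem_coneOf_of_mem {S : Finset N} {g : N} (hg : g ∈ S) : g ∈ coneOf S := by
  refine ⟨fun v => if v = g then 1 else 0, fun v => by dsimp; split <;> norm_num, ?_⟩
  rw [show (∑ v ∈ S, (if v = g then (1:ℝ) else 0) • v) =
      ∑ v ∈ S, (if v = g then v else 0) from Finset.sum_congr rfl fun v _ => by
        split <;> simp]
  simp [Finset.sum_ite_eq' S g, hg]

lemma coneOf_mono {S T : Finset N} (h : S ⊆ T) : coneOf S ⊆ coneOf T := by
  rintro x ⟨c, hc, rfl⟩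
  refine ⟨fun v => if v ∈ S then c v else 0, fun v => by dsimp; split <;> [exact hc v; rfl], ?_⟩
  rw [← Finset.sum_subset h (by intro v _ hv; simp [hv])]
  exact Finset.sum_congr rfl fun v hv => by simp [hv]

lemma sum_mem_coneOf {ι : Type*} {S : Finset N} {t : Finset ι} {f : ι → N}
    (hf : ∀ i ∈ t, f i ∈ coneOf S) : ∑ i ∈ t, f i ∈ coneOf S := by
  induction t using Finset.induction_on with
  | empty => simpa using zero_mem_coneOf S
  | insert a s hnot ih =>
    rw [Finset.sum_insert hnot]
    exact add_mem_coneOf (hf _ (Finset.mem_insert_self _ _))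
      (ih fun i hi => hf i (Finset.mem_insert_of_mem hi))

lemma image_coneOf {N' : Type*} [AddCommGroup N'] [Module ℝ N'] (e : N ≃ₗ[ℝ] N')
    (S : Finset N) : coneOf (S.image e) = e '' coneOf S := by
  ext x
  constructor
  · rintro ⟨c, hc, hx⟩
    rw [Finset.sum_image (fun a _ b _ h => e.injective h)] at hx
    refine ⟨∑ v ∈ S, c (e v) • v, ⟨fun v => c (e v), fun v => hc _, rfl⟩, ?_⟩
    rw [map_sum, hx]
    simp
  · rintro ⟨y, ⟨c, hc, rfl⟩, rfl⟩
    refine ⟨fun v => c (e.symm v), fun v => hc _, ?_⟩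
    rw [Finset.sum_image (fun a _ b _ h => e.injective h), map_sum]
    simp

lemma mem_coneOf_neg_image {S : Finset N} {x : N} :
    x ∈ coneOf (S.image (fun v => -v)) ↔ -x ∈ coneOf S := by
  have himg : S.image (fun v => -v) = S.image (LinearEquiv.neg ℝ) := by
    apply Finset.image_congr; intro v _; simp
  rw [himg, image_coneOf]
  constructor
  · rintro ⟨y, hy, rfl⟩; simpa using hy
  · intro h; exact ⟨-x, h, by simp⟩

lemma dual_nonneg_on_coneOf {S : Finset N} {φ : Module.Dual ℝ N}
    (hφ : ∀ g ∈ S, 0 ≤ φ g) : ∀ v ∈ coneOf S, 0 ≤ φ v := by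
  rintro v ⟨c, hc, rfl⟩
  rw [map_sum]
  exact Finset.sum_nonneg fun g hg => by
    rw [map_smul]; exact mul_nonneg (hc g) (hφ g hg)

section Closed

variable {E : Type*} [NormedAddCommGroup E] [NormedSpace ℝ E] [FiniteDimensional ℝ E]

lemma coneOf_eq_union (S : Finset E) (d : E → ℝ) (hrel : ∑ v ∈ S, d v • v = 0)
    (hpos : ∃ v ∈ S, 0 < d v) :
    coneOf S = ⋃ g ∈ S.filter (fun v => 0 < d v), coneOf (S.erase g) := by
  obtain ⟨v₀, hv₀S, hv₀⟩ := hpos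
  apply Set.Subset.antisymm
  · rintro x ⟨c, hc, rfl⟩
    obtain ⟨g₀, hg₀P, hg₀min⟩ := Finset.exists_min_image (S.filter (fun v => 0 < d v))
      (fun v => c v / d v) ⟨v₀, Finset.mem_filter.2 ⟨hv₀S, hv₀⟩⟩
    have hg₀S : g₀ ∈ S := (Finset.mem_filter.1 hg₀P).1
    have hdg₀ : 0 < d g₀ := (Finset.mem_filter.1 hg₀P).2
    set t : ℝ := c g₀ / d g₀ with ht
    have ht0 : 0 ≤ t := div_nonneg (hc g₀) hdg₀.le
    have key : ∀ v ∈ S, 0 ≤ c v - t * d v := by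
      intro v hv
      by_cases hdv : 0 < d v
      · have h1 := (le_div_iff₀ hdv).1 (hg₀min v (Finset.mem_filter.2 ⟨hv, hdv⟩))
        linarith
      · nlinarith [hc v, mul_nonneg ht0 (neg_nonneg.2 (not_lt.1 hdv))]
    refine Set.mem_biUnion hg₀P ⟨fun v => if v ∈ S then c v - t * d v else 0,
      fun v => by dsimp; split <;> [exact key v ‹_›; rfl], ?_⟩
    have hsum : ∑ v ∈ S, (fun v => if v ∈ S then c v - t * d v else 0) v • v
        = ∑ v ∈ S, c v • v := by
      rw [show ∑ v ∈ S, (fun v => if v ∈ S then c v - t * d v else 0) v • v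
          = ∑ v ∈ S, (c v • v - t • d v • v) from Finset.sum_congr rfl fun v hv => by
            simp [hv, sub_smul, smul_smul]]
      rw [Finset.sum_sub_distrib, ← Finset.smul_sum, hrel, smul_zero, sub_zero]
    rw [← hsum]
    rw [Finset.sum_erase]
    simp [hg₀S, ht, div_mul_cancel₀ _ hdg₀.ne', sub_self]
  · exact Set.iUnion₂_subset fun g _ => coneOf_mono (Finset.erase_subset _ _)

lemma isClosed_coneOf (S : Finset E) : IsClosed (coneOf S) := by
  induction S using Finset.strongInduction with
  | _ S ih =>
    by_cases hli : LinearIndependent ℝ (fun i : ↥S => (i : E))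
    · set f : (↥S → ℝ) →ₗ[ℝ] E := Fintype.linearCombination ℝ (fun i : ↥S => (i : E)) with hf
      have hker : LinearMap.ker f = ⊥ := by
        rw [LinearMap.ker_eq_bot']
        intro c hcz
        exact funext (Fintype.linearIndependent_iff.1 hli c
          (by rwa [hf, Fintype.linearCombination_apply] at hcz))
      have hemb := LinearMap.isClosedEmbedding_of_injective (f := f) hker
      have himg : coneOf S = f '' {c : ↥S → ℝ | ∀ i, 0 ≤ c i} := by
        ext x
        constructor
        · rintro ⟨c, hc, rfl⟩
          refine ⟨fun i => c i, fun i => hc _, ?_⟩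
          rw [hf]; simp only [Fintype.linearCombination_apply]
          exact (Finset.sum_coe_sort S (fun v => c v • v))
        · rintro ⟨c, hc, rfl⟩
          refine ⟨fun v => if h : v ∈ S then c ⟨v, h⟩ else 0,
            fun v => by dsimp; split <;> [exact hc _; rfl], ?_⟩
          rw [hf]; simp only [Fintype.linearCombination_apply]
          rw [← Finset.sum_coe_sort S (fun v => (if h : v ∈ S then c ⟨v, h⟩ else 0) • v)]
          exact Finset.sum_congr rfl fun i _ => by simp [i.2]
      rw [himg]
      refine hemb.isClosedMap _ ?_
      have : {c : ↥S → ℝ | ∀ i, 0 ≤ c i} = ⋂ i, (fun c : ↥S → ℝ => c i) ⁻¹' Set.Ici 0 := by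
        ext c; simp [Set.mem_iInter]
      rw [this]
      exact isClosed_iInter fun i => isClosed_Ici.preimage (continuous_apply i)
    · obtain ⟨g, hgsum, i, hgi⟩ := Fintype.not_linearIndependent_iff.1 hli
      set d : E → ℝ := fun v => if h : v ∈ S then g ⟨v, h⟩ else 0 with hd
      have hrel : ∑ v ∈ S, d v • v = 0 := by
        rw [← Finset.sum_coe_sort S (fun v => d v • v), ← hgsum]
        exact Finset.sum_congr rfl fun j _ => by simp [hd, j.2]
      have hdi : d i ≠ 0 := by simp [hd, i.2, hgi]
      have closed_union : ∀ d' : E → ℝ, (∑ v ∈ S, d' v • v = 0) → (∃ v ∈ S, 0 < d' v) →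
          IsClosed (coneOf S) := by
        intro d' hrel' hpos'
        rw [coneOf_eq_union S d' hrel' hpos']
        exact (S.filter _).finite_toSet.isClosed_biUnion fun g hg =>
          ih _ (Finset.erase_ssubset (Finset.mem_of_mem_filter _ hg))
      rcases hdi.lt_or_gt with hneg | hpos
      · refine closed_union (fun v => -d v) ?_ ⟨i, i.2, by simpa using hneg⟩
        simp only [neg_smul, Finset.sum_neg_distrib, hrel, neg_zero]
      · exact closed_union d hrel ⟨i, i.2, hpos⟩

end Closed

/-- The cone as a `ConvexCone`. -/
noncomputable def coneOfCC {E : Type*} [AddCommGroup E] [Module ℝ E] (S : Finset E) :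
    ConvexCone ℝ E where
  carrier := coneOf S
  smul_mem' := fun _ hc _ hx => smul_mem_coneOf hc.le hx
  add_mem' := fun _ hx _ hy => add_mem_coneOf hx hy

/-- Biduality / Farkas: a point on which every functional nonnegative on `S` is nonnegative
lies in the cone generated by `S`. -/
lemma mem_coneOf_of_forall_dual [FiniteDimensional ℝ N] (S : Finset N) (x : N)
    (h : ∀ φ : Module.Dual ℝ N, (∀ g ∈ S, 0 ≤ φ g) → 0 ≤ φ x) : x ∈ coneOf S := by
  set n := Module.finrank ℝ N
  set e : N ≃ₗ[ℝ] EuclideanSpace ℝ (Fin n) :=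
    (Module.finBasis ℝ N).equivFun.trans (WithLp.linearEquiv 2 ℝ (Fin n → ℝ)).symm with he
  set T : Finset (EuclideanSpace ℝ (Fin n)) := S.image e with hT
  by_contra hx
  have hex : e x ∉ coneOf T := by
    rw [hT, show coneOf (S.image e) = e '' coneOf S by convert image_coneOf e S]
    rintro ⟨y, hy, hyx⟩
    exact hx (e.injective hyx ▸ hy)
  obtain ⟨y, hy1, hy2⟩ := ProperCone.hyperplane_separation'
    ({ carrier := coneOf T
       add_mem' := fun hx hy => add_mem_coneOf hx hy
       zero_mem' := zero_mem_coneOf T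
       smul_mem' := fun c _ hx => by
         exact smul_mem_coneOf (r := (c : ℝ)) c.2 hx
       isClosed' := isClosed_coneOf T } : ProperCone ℝ _) hex
  set φ : Module.Dual ℝ N := ((innerSL ℝ y).toLinearMap).comp e.toLinearMap with hφ
  have hφg : ∀ g ∈ S, 0 ≤ φ g := by
    intro g hg
    have hmem : (e g : EuclideanSpace ℝ (Fin n)) ∈ coneOf T :=
      mem_coneOf_of_mem (Finset.mem_image_of_mem _ hg)
    have := hy1 _ hmem
    rw [real_inner_comm] at this
    rw [hφ]
    simpa using this
  have := h φ hφg
  rw [hφ] at this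
  simp only [LinearMap.comp_apply, LinearEquiv.coe_coe, ContinuousLinearMap.coe_coe,
    innerSL_apply_apply] at this
  linarith [real_inner_comm y (e x)]

end SepAux

open SepAux

def IsPolyhedralCone {N : Type*} [AddCommGroup N] [Module ℝ N] (σ : Set N) : Prop :=
  ∃ S : Finset N, σ = {x | ∃ c : N → ℝ, (∀ v, 0 ≤ c v) ∧ x = ∑ v ∈ S, c v • v}

def dualCone {N : Type*} [AddCommGroup N] [Module ℝ N] (σ : Set N) :
    Set (Module.Dual ℝ N) := {u | ∀ v ∈ σ, 0 ≤ u v}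

def IsFaceOf {N : Type*} [AddCommGroup N] [Module ℝ N] (τ σ : Set N) : Prop :=
  ∃ m ∈ dualCone σ, τ = {v | m v = 0} ∩ σ

/-- Separation Lemma: if polyhedral cones `σ` and `σ'` meet in the common face
`τ = σ ∩ σ'`, then there is `m ∈ σ∨ ∩ (-σ')∨` with `τ = H_m ∩ σ = H_m ∩ σ'`. -/
theorem separation_lemma {N : Type*} [AddCommGroup N] [Module ℝ N]
    [FiniteDimensional ℝ N] (σ σ' : Set N)
    (hσ : IsPolyhedralCone σ) (hσ' : IsPolyhedralCone σ')
    (hface : IsFaceOf (σ ∩ σ') σ) (hface' : IsFaceOf (σ ∩ σ') σ') :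
    ∃ m : Module.Dual ℝ N, m ∈ dualCone σ ∧ m ∈ dualCone (-σ') ∧
      σ ∩ σ' = {v | m v = 0} ∩ σ ∧ σ ∩ σ' = {v | m v = 0} ∩ σ' := by
  classical
  obtain ⟨S, rfl⟩ := hσ
  obtain ⟨S', rfl⟩ := hσ'
  show ∃ m : Module.Dual ℝ N, m ∈ dualCone (coneOf S) ∧ m ∈ dualCone (-(coneOf S')) ∧
      coneOf S ∩ coneOf S' = {v | m v = 0} ∩ coneOf S ∧
      coneOf S ∩ coneOf S' = {v | m v = 0} ∩ coneOf S'
  replace hface : ∃ m₁ ∈ dualCone (coneOf S),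
      coneOf S ∩ coneOf S' = {v | m₁ v = 0} ∩ coneOf S := hface
  replace hface' : ∃ m₂ ∈ dualCone (coneOf S'),
      coneOf S ∩ coneOf S' = {v | m₂ v = 0} ∩ coneOf S' := hface'
  set σ : Set N := coneOf S with hσdef
  set σ' : Set N := coneOf S' with hσ'def
  set T : Finset N := S'.image (fun v => -v) with hTdef
  set G : Finset N := S ∪ T with hGdef
  set γ : Set N := coneOf G with hγdef
  have hSγ : σ ⊆ γ := coneOf_mono Finset.subset_union_left
  have hTγ : coneOf T ⊆ γ := coneOf_mono Finset.subset_union_right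
  have hTneg : ∀ x : N, x ∈ coneOf T ↔ -x ∈ σ' := fun x => mem_coneOf_neg_image
  -- the dual cone of γ
  set D : Set (Module.Dual ℝ N) := dualCone γ with hDdef
  -- construct m
  set pick : N → Module.Dual ℝ N := fun g =>
    if h : ∃ y ∈ D, 0 < y g then h.choose else 0 with hpick
  have hpickD : ∀ g, pick g ∈ D := by
    intro g
    by_cases h : ∃ y ∈ D, 0 < y g
    · rw [hpick]; dsimp only; rw [dif_pos h]; exact h.choose_spec.1
    · rw [hpick]; dsimp only; rw [dif_neg h]; intro v _; simp
  set m : Module.Dual ℝ N := ∑ g ∈ G, pick g with hm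
  have hmD : m ∈ D := by
    intro v hv
    rw [hm, LinearMap.sum_apply]
    exact Finset.sum_nonneg fun g _ => hpickD g v hv
  -- key: everything in γ killed by m has its negative in γ
  have keyA : ∀ w ∈ γ, m w = 0 → -w ∈ γ := by
    rintro w ⟨c, hc, rfl⟩ hmw
    have hterm : ∀ g ∈ G, c g * m g = 0 := by
      have hmw' : ∑ g ∈ G, c g * m g = 0 := by
        rw [map_sum] at hmw
        simpa only [map_smul, smul_eq_mul] using hmw
      intro g hg
      exact (Finset.sum_eq_zero_iff_of_nonneg fun g' hg' =>
        mul_nonneg (hc g') (hmD g' (mem_coneOf_of_mem hg'))).1 hmw' g hg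
    have hnegmem : ∀ g ∈ G, c g • (-g) ∈ γ := by
      intro g hg
      by_cases hcg : c g = 0
      · rw [hcg, zero_smul]; exact zero_mem_coneOf G
      · have hmg : m g = 0 := by
          have := hterm g hg
          rcases mul_eq_zero.1 this with h | h
          · exact absurd h hcg
          · exact h
        -- every element of D vanishes at g
        have hall : ∀ y ∈ D, y g = 0 := by
          have hpickg : pick g g = 0 := by
            have hsum0 : ∑ g' ∈ G, pick g' g = 0 := by
              rw [← LinearMap.sum_apply, ← hm, hmg]
            have := (Finset.sum_eq_zero_iff_of_nonneg
              (fun g' _ => hpickD g' g (mem_coneOf_of_mem hg))).1 hsum0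
            exact this g hg
          intro y hyD
          refine le_antisymm ?_ (hyD g (mem_coneOf_of_mem hg))
          by_contra hlt
          push_neg at hlt
          have hex : ∃ y ∈ D, 0 < y g := ⟨y, hyD, hlt⟩
          have hpos : 0 < pick g g := by
            rw [hpick]; dsimp only; rw [dif_pos hex]; exact hex.choose_spec.2
          exact absurd hpickg (ne_of_gt hpos)
        have hneg : -g ∈ γ := by
          apply mem_coneOf_of_forall_dual
          intro φ hφ
          have hφD : φ ∈ D := fun v hv => dual_nonneg_on_coneOf hφ v hv
          rw [map_neg, hall φ hφD, neg_zero]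
        exact smul_mem_coneOf (hc g) hneg
    have : -(∑ g ∈ G, c g • g) = ∑ g ∈ G, c g • (-g) := by
      rw [← Finset.sum_neg_distrib]
      exact Finset.sum_congr rfl fun g _ => by rw [smul_neg]
    rw [this]
    exact sum_mem_coneOf hnegmem
  -- key: splitting of γ
  have keyB : ∀ w ∈ γ, ∃ a b, a ∈ σ ∧ b ∈ coneOf T ∧ w = a + b := by
    rintro w ⟨c, hc, rfl⟩
    rw [hGdef, ← Finset.union_sdiff_self_eq_union, Finset.sum_union Finset.sdiff_disjoint.symm]
    refine ⟨_, _, ⟨c, hc, rfl⟩, ?_, rfl⟩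
    refine ⟨fun v => if v ∈ T \ S then c v else 0,
      fun v => by dsimp; split <;> [exact hc v; rfl], ?_⟩
    rw [← Finset.sum_subset (Finset.sdiff_subset : T \ S ⊆ T)
      (by intro v _ hv; simp [hv])]
    exact Finset.sum_congr rfl fun v hv => by simp [hv]
  -- m vanishes on τ
  have hmτ : ∀ v ∈ σ ∩ σ', m v = 0 := by
    rintro v ⟨hv1, hv2⟩
    have h1 : 0 ≤ m v := hmD v (hSγ hv1)
    have h2 : 0 ≤ m (-v) := hmD (-v) (hTγ ((hTneg (-v)).2 (by simpa using hv2)))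
    rw [map_neg] at h2
    linarith
  obtain ⟨m₁, hm₁D, hτ₁⟩ := hface
  obtain ⟨m₂, hm₂D, hτ₂⟩ := hface'
  refine ⟨m, fun v hv => hmD v (hSγ hv), ?_, ?_, ?_⟩
  · -- m ∈ dualCone (-σ')
    intro v hv
    have : -v ∈ σ' := Set.mem_neg.1 hv
    exact hmD v (hTγ ((hTneg v).2 this))
  · -- σ ∩ σ' = ker m ∩ σ
    apply Set.Subset.antisymm
    · rintro v hv
      exact ⟨hmτ v hv, hv.1⟩
    · rintro v ⟨hmv, hvσ⟩
      have hnegγ : -v ∈ γ := keyA v (hSγ hvσ) hmv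
      obtain ⟨a, b, haσ, hbT, hab⟩ := keyB _ hnegγ
      have hbσ' : -b ∈ σ' := (hTneg b).1 hbT
      have hva : v + a = -b := by
        have h := congrArg Neg.neg hab
        rw [neg_neg] at h
        rw [h]; abel
      have hvaτ : v + a ∈ σ ∩ σ' := ⟨add_mem_coneOf hvσ haσ, hva ▸ hbσ'⟩
      rw [hτ₁] at hvaτ
      have h1 : m₁ v + m₁ a = 0 := by
        have := hvaτ.1
        simpa [map_add] using this
      have h2 : 0 ≤ m₁ v := hm₁D v hvσ
      have h3 : 0 ≤ m₁ a := hm₁D a haσ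
      rw [hτ₁]
      exact ⟨show m₁ v = 0 by linarith, hvσ⟩
  · -- σ ∩ σ' = ker m ∩ σ'
    apply Set.Subset.antisymm
    · rintro v hv
      exact ⟨hmτ v hv, hv.2⟩
    · rintro v ⟨hmv, hvσ'⟩
      have hnegT : -v ∈ coneOf T := (hTneg (-v)).2 (by simpa using hvσ')
      have hvγ : v ∈ γ := by
        have := keyA (-v) (hTγ hnegT) (by rw [map_neg, hmv, neg_zero])
        simpa using this
      obtain ⟨a, b, haσ, hbT, hab⟩ := keyB _ hvγ
      have hbσ' : -b ∈ σ' := (hTneg b).1 hbT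
      have haτ : a ∈ σ ∩ σ' := by
        refine ⟨haσ, ?_⟩
        have : a = v + (-b) := by rw [hab]; abel
        rw [this]
        exact add_mem_coneOf hvσ' hbσ'
      rw [hτ₂] at haτ
      have h1 : m₂ a = 0 := haτ.1
      have h2 : 0 ≤ m₂ v := hm₂D v hvσ'
      have h3 : 0 ≤ m₂ (-b) := hm₂D (-b) hbσ'
      have h4 : m₂ a = m₂ v + m₂ (-b) := by
        rw [show a = v + (-b) from by rw [hab]; abel, map_add]
      rw [hτ₂]
      exact ⟨show m₂ v = 0 by linarith, hvσ'⟩
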